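/- arXiv:2004.02823 — 2 statements merged into one kernel-verified Lean document; each statement's English description precedes it below -/
import Mathlib

section
/- Let f : ℝᵈ → ℝ be continuously differentiable, non-negative, and (m,b)-dissipative, i.e. ⟨x, ∇f(x)⟩ ≥ m‖x‖² - b for all x, with m > 0, b ≥ 0. Then for every c ∈ (0,1) and all x ∈ ℝᵈ, f(x) ≥ (m(1-c²)/2)‖x‖² + b·log c. In particular, taking c = 1/√3, f(x) ≥ (m/3)‖x‖² - (b/2)·log 3. -/
open RealInnerProductSpace

/-- For a non-negative C¹ function `f` that is (m,b)-dissipative, for every `c ∈ (0,1)`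
one has `f(x) ≥ (m(1-c²)/2)‖x‖² + b log c`; in particular (with `c = 1/√3`)
`f(x) ≥ (m/3)‖x‖² - (b/2) log 3`. -/
theorem dissipative_quadratic_lower_bound {d : ℕ} {f : EuclideanSpace ℝ (Fin d) → ℝ}
    {m b : ℝ} (hm : 0 < m) (hb : 0 ≤ b) (hf : ContDiff ℝ 1 f)
    (hnonneg : ∀ x, 0 ≤ f x)
    (hdiss : ∀ x : EuclideanSpace ℝ (Fin d), ⟪x, gradient f x⟫ ≥ m * ‖x‖ ^ 2 - b) :
    (∀ c : ℝ, 0 < c → c < 1 →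
      ∀ x : EuclideanSpace ℝ (Fin d),
        f x ≥ m * (1 - c ^ 2) / 2 * ‖x‖ ^ 2 + b * Real.log c) ∧
      ∀ x : EuclideanSpace ℝ (Fin d),
        f x ≥ m / 3 * ‖x‖ ^ 2 - b / 2 * Real.log 3 := by
  have hdf : Differentiable ℝ f := hf.differentiable one_ne_zero
  have hgradcont : Continuous (fun y => gradient f y) := by
    have h1 : Continuous (fun y => fderiv ℝ f y) := hf.continuous_fderiv one_ne_zero
    exact (InnerProductSpace.toDual ℝ (EuclideanSpace ℝ (Fin d))).symm.continuous.comp h1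
  have main : ∀ c : ℝ, 0 < c → c < 1 →
      ∀ x : EuclideanSpace ℝ (Fin d),
        f x ≥ m * (1 - c ^ 2) / 2 * ‖x‖ ^ 2 + b * Real.log c := by
    intro c hc hc1 x
    set g : ℝ → ℝ := fun t => ⟪x, gradient f (t • x)⟫ with hg
    have hgc : Continuous g := by
      apply Continuous.inner continuous_const
      exact hgradcont.comp (continuous_id.smul continuous_const)
    have hderiv : ∀ t : ℝ, HasDerivAt (fun s => f (s • x)) (g t) t := by
      intro t
      have hsm : HasDerivAt (fun s : ℝ => s • x) ((1:ℝ) • x) t :=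
        (hasDerivAt_id t).smul_const x
      have hfd := ((hdf (t • x)).hasGradientAt).hasFDerivAt
      have h2 := hfd.comp_hasDerivAt t hsm
      have h3 : g t = (InnerProductSpace.toDual ℝ (EuclideanSpace ℝ (Fin d))
          (gradient f (t • x))) ((1:ℝ) • x) := by
        rw [InnerProductSpace.toDual_apply_apply, one_smul, real_inner_comm]
      rw [h3]
      exact h2
    have hint : f ((1:ℝ) • x) - f (c • x) = ∫ t in c..(1:ℝ), g t := by
      rw [intervalIntegral.integral_eq_sub_of_hasDerivAt
        (fun t _ => hderiv t) (hgc.intervalIntegrable c 1)]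
    have hlow : ∀ t ∈ Set.Icc c 1, m * t * ‖x‖ ^ 2 - b * (1 / t) ≤ g t := by
      intro t ht
      have htpos : 0 < t := lt_of_lt_of_le hc ht.1
      have h := hdiss (t • x)
      rw [real_inner_smul_left] at h
      have hn : ‖t • x‖ ^ 2 = t ^ 2 * ‖x‖ ^ 2 := by
        rw [norm_smul]; rw [mul_pow]; rw [Real.norm_eq_abs, sq_abs]
      rw [hn] at h
      have : (m * (t ^ 2 * ‖x‖ ^ 2) - b) / t ≤ g t := by
        rw [div_le_iff₀ htpos]
        calc m * (t ^ 2 * ‖x‖ ^ 2) - b ≤ t * ⟪x, gradient f (t • x)⟫ := h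
          _ = g t * t := by ring
      calc m * t * ‖x‖ ^ 2 - b * (1 / t) = (m * (t ^ 2 * ‖x‖ ^ 2) - b) / t := by
            field_simp
        _ ≤ g t := this
    have hintlow : (∫ t in c..(1:ℝ), (m * t * ‖x‖ ^ 2 - b * (1 / t))) ≤ ∫ t in c..(1:ℝ), g t := by
      apply intervalIntegral.integral_mono_on hc1.le
      · apply ContinuousOn.intervalIntegrable
        rw [Set.uIcc_of_le hc1.le]
        apply ContinuousOn.sub
        · exact (continuous_const.mul continuous_id).mul continuous_const |>.continuousOn
        · exact continuousOn_const.mul (continuousOn_const.div continuousOn_id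
            (fun t ht => (lt_of_lt_of_le hc ht.1).ne'))
      · exact hgc.intervalIntegrable c 1
      · exact hlow
    have hcomp : (∫ t in c..(1:ℝ), (m * t * ‖x‖ ^ 2 - b * (1 / t)))
        = m * (1 - c ^ 2) / 2 * ‖x‖ ^ 2 + b * Real.log c := by
      have h0 : (0:ℝ) ∉ Set.uIcc c 1 := by
        rw [Set.uIcc_of_le hc1.le]
        intro h; exact absurd h.1 (not_le.mpr hc)
      have hi1 : IntervalIntegrable (fun t : ℝ => m * t * ‖x‖ ^ 2) MeasureTheory.volume c 1 :=
        ((continuous_const.mul continuous_id).mul continuous_const).intervalIntegrable c 1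
      have hi2 : IntervalIntegrable (fun t : ℝ => b * (1 / t)) MeasureTheory.volume c 1 := by
        apply ContinuousOn.intervalIntegrable
        exact continuousOn_const.mul (continuousOn_const.div continuousOn_id
          (fun t ht => ne_of_mem_of_not_mem ht h0))
      rw [intervalIntegral.integral_sub hi1 hi2]
      have e1 : (∫ t in c..(1:ℝ), m * t * ‖x‖ ^ 2) = m * (1 - c ^ 2) / 2 * ‖x‖ ^ 2 := by
        have : (fun t : ℝ => m * t * ‖x‖ ^ 2) = fun t : ℝ => (m * ‖x‖ ^ 2) * t := by
          funext t; ring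
        rw [this, intervalIntegral.integral_const_mul, integral_id]
        ring
      have e2 : (∫ t in c..(1:ℝ), b * (1 / t)) = - (b * Real.log c) := by
        rw [intervalIntegral.integral_const_mul, integral_one_div h0]
        rw [one_div, Real.log_inv]
        ring
      rw [e1, e2]; ring
    have := le_trans hintlow (le_of_eq hint.symm)
    rw [hcomp] at this
    have h0 : 0 ≤ f (c • x) := hnonneg _
    rw [one_smul] at this
    linarith
  refine ⟨main, fun x => ?_⟩
  have h3 : (0:ℝ) < Real.sqrt 3 := Real.sqrt_pos.mpr (by norm_num)
  have hc : (0:ℝ) < 1 / Real.sqrt 3 := by positivity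
  have hc1 : (1:ℝ) / Real.sqrt 3 < 1 := by
    rw [div_lt_one h3]
    nlinarith [Real.sq_sqrt (by norm_num : (3:ℝ) ≥ 0), Real.sqrt_nonneg 3]
  have := main _ hc hc1 x
  have hsq : (1 / Real.sqrt 3) ^ 2 = 1 / 3 := by
    rw [div_pow, one_pow, Real.sq_sqrt (by norm_num : (0:ℝ) ≤ 3)]
  have hlog : Real.log (1 / Real.sqrt 3) = - (Real.log 3 / 2) := by
    rw [one_div, Real.log_inv, Real.log_sqrt (by norm_num : (0:ℝ) ≤ 3)]
  rw [hsq, hlog] at this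
  calc f x ≥ m * (1 - 1/3) / 2 * ‖x‖ ^ 2 + b * -(Real.log 3 / 2) := this
    _ = m / 3 * ‖x‖ ^ 2 - b / 2 * Real.log 3 := by ring
end

section
/- Let F : ℝᵈ → ℝ be C² with M-Lipschitz gradient, let β > α > 0, and let L_J g = -⟨(I+J)∇F, ∇g⟩ + β⁻¹ Δg with J anti-symmetric. Then pointwise L_J(e^{αF}) ≤ αβ⁻¹ M d · e^{αF}. -/
open RealInnerProductSpace

/-- The Laplacian of `g : ℝᵈ → ℝ`, as the sum of second partial derivatives. -/
noncomputable def laplacian {d : ℕ} (g : EuclideanSpace ℝ (Fin d) → ℝ)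
    (x : EuclideanSpace ℝ (Fin d)) : ℝ :=
  ∑ i : Fin d,
    fderiv ℝ (fun y => fderiv ℝ g y (EuclideanSpace.single i 1)) x
      (EuclideanSpace.single i 1)

section Aux
open InnerProductSpace
variable {d : ℕ}


lemma fderiv_eq_toDual_grad (F : EuclideanSpace ℝ (Fin d) → ℝ) (y : EuclideanSpace ℝ (Fin d)) :
    fderiv ℝ F y = toDual ℝ _ (gradient F y) := by
  rw [gradient, LinearIsometryEquiv.apply_symm_apply]

lemma inner_grad (F : EuclideanSpace ℝ (Fin d) → ℝ) (y v : EuclideanSpace ℝ (Fin d)) :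
    ⟪gradient F y, v⟫ = fderiv ℝ F y v := by
  rw [fderiv_eq_toDual_grad, toDual_apply_apply]

lemma hasFDerivAt_expF {F : EuclideanSpace ℝ (Fin d) → ℝ} (hF : ContDiff ℝ 2 F) (α : ℝ)
    (x : EuclideanSpace ℝ (Fin d)) :
    HasFDerivAt (fun y => Real.exp (α * F y))
      ((α * Real.exp (α * F x)) • fderiv ℝ F x) x := by
  have h1 : HasFDerivAt F (fderiv ℝ F x) x :=
    ((hF.differentiable (by norm_num)) x).hasFDerivAt
  have h2 : HasFDerivAt (fun y => α * F y) (α • fderiv ℝ F x) x := h1.const_mul α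
  have h3 := (Real.hasDerivAt_exp (α * F x)).comp_hasFDerivAt x h2
  simpa [smul_smul, mul_comm, Function.comp_def] using h3

lemma grad_expF {F : EuclideanSpace ℝ (Fin d) → ℝ} (hF : ContDiff ℝ 2 F) (α : ℝ)
    (x : EuclideanSpace ℝ (Fin d)) :
    gradient (fun y => Real.exp (α * F y)) x
      = (α * Real.exp (α * F x)) • gradient F x := by
  rw [gradient, (hasFDerivAt_expF hF α x).fderiv, map_smul, gradient]

lemma hasFDerivAt_fderivF {F : EuclideanSpace ℝ (Fin d) → ℝ} (hF : ContDiff ℝ 2 F)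
    (x : EuclideanSpace ℝ (Fin d)) :
    HasFDerivAt (fderiv ℝ F) (fderiv ℝ (fderiv ℝ F) x) x := by
  have h : ContDiff ℝ (1+1) F := by norm_num; exact hF
  have : ContDiff ℝ 1 (fderiv ℝ F) := (contDiff_succ_iff_fderiv.mp h).2.2
  exact ((this.differentiable one_ne_zero) x).hasFDerivAt

lemma hasFDerivAt_dirF {F : EuclideanSpace ℝ (Fin d) → ℝ} (hF : ContDiff ℝ 2 F)
    (x e : EuclideanSpace ℝ (Fin d)) :
    HasFDerivAt (fun y => fderiv ℝ F y e)
      ((ContinuousLinearMap.apply ℝ ℝ e).comp (fderiv ℝ (fderiv ℝ F) x)) x :=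
  (ContinuousLinearMap.apply ℝ ℝ e).hasFDerivAt.comp x (hasFDerivAt_fderivF hF x)

lemma second_dir_expF {F : EuclideanSpace ℝ (Fin d) → ℝ} (hF : ContDiff ℝ 2 F) (α : ℝ)
    (x e : EuclideanSpace ℝ (Fin d)) :
    fderiv ℝ (fun y => fderiv ℝ (fun z => Real.exp (α * F z)) y e) x e
      = α * Real.exp (α * F x) * fderiv ℝ (fun y => fderiv ℝ F y e) x e
        + α ^ 2 * Real.exp (α * F x) * (fderiv ℝ F x e) ^ 2 := by
  have hfun : (fun y => fderiv ℝ (fun z => Real.exp (α * F z)) y e)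
      = fun y => (α * Real.exp (α * F y)) * fderiv ℝ F y e := by
    funext y
    rw [(hasFDerivAt_expF hF α y).fderiv]
    simp [mul_assoc]
  have hu : HasFDerivAt (fun y => α * Real.exp (α * F y))
      (α • ((α * Real.exp (α * F x)) • fderiv ℝ F x)) x :=
    (hasFDerivAt_expF hF α x).const_mul α
  have hv := hasFDerivAt_dirF hF x e
  have hprod : HasFDerivAt (fun y => α * Real.exp (α * F y) * fderiv ℝ F y e) _ x := hu.mul hv
  rw [hfun, hprod.fderiv, (hasFDerivAt_dirF hF x e).fderiv]
  simp only [ContinuousLinearMap.add_apply, ContinuousLinearMap.smul_apply,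
    ContinuousLinearMap.coe_comp', Function.comp_apply, ContinuousLinearMap.apply_apply,
    smul_eq_mul]
  ring

lemma sum_sq_fderiv {F : EuclideanSpace ℝ (Fin d) → ℝ}
    (x : EuclideanSpace ℝ (Fin d)) :
    ∑ i : Fin d, (fderiv ℝ F x (EuclideanSpace.single i 1)) ^ 2 = ‖gradient F x‖ ^ 2 := by
  have h : ∀ i, fderiv ℝ F x (EuclideanSpace.single i 1) = gradient F x i := by
    intro i
    rw [← inner_grad, real_inner_comm, EuclideanSpace.inner_single_left]
    simp
  simp only [h]
  rw [← real_inner_self_eq_norm_sq, PiLp.inner_apply]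
  simp [pow_two]

lemma lap_expF {F : EuclideanSpace ℝ (Fin d) → ℝ} (hF : ContDiff ℝ 2 F) (α : ℝ)
    (x : EuclideanSpace ℝ (Fin d)) :
    laplacian (fun y => Real.exp (α * F y)) x
      = α * Real.exp (α * F x) * laplacian F x
        + α ^ 2 * Real.exp (α * F x) * ‖gradient F x‖ ^ 2 := by
  unfold laplacian
  rw [← sum_sq_fderiv (F := F) x, Finset.mul_sum, Finset.mul_sum, ← Finset.sum_add_distrib]
  exact Finset.sum_congr rfl fun i _ => second_dir_expF hF α x _

lemma lap_le {F : EuclideanSpace ℝ (Fin d) → ℝ} (hF : ContDiff ℝ 2 F) {M : ℝ} (hM : 0 ≤ M)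
    (hLip : ∀ w v : EuclideanSpace ℝ (Fin d),
      ‖gradient F w - gradient F v‖ ≤ M * ‖w - v‖)
    (x : EuclideanSpace ℝ (Fin d)) :
    laplacian F x ≤ M * d := by
  have hH : ‖fderiv ℝ (fderiv ℝ F) x‖ ≤ M := by
    apply norm_fderiv_le_of_lip' ℝ hM
    filter_upwards with y
    rw [fderiv_eq_toDual_grad, fderiv_eq_toDual_grad, ← map_sub,
      LinearIsometryEquiv.norm_map]
    exact hLip y x
  have key : ∀ i : Fin d,
      fderiv ℝ (fun y => fderiv ℝ F y (EuclideanSpace.single i 1)) x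
        (EuclideanSpace.single i 1) ≤ M := by
    intro i
    set e := EuclideanSpace.single (𝕜 := ℝ) i (1 : ℝ)
    have he : ‖e‖ = 1 := by simp [e, EuclideanSpace.norm_single]
    rw [(hasFDerivAt_dirF hF x e).fderiv]
    calc ((ContinuousLinearMap.apply ℝ ℝ e).comp (fderiv ℝ (fderiv ℝ F) x)) e
        ≤ ‖(fderiv ℝ (fderiv ℝ F) x e) e‖ := le_abs_self _
      _ ≤ ‖fderiv ℝ (fderiv ℝ F) x e‖ * ‖e‖ := ContinuousLinearMap.le_opNorm _ _
      _ ≤ (‖fderiv ℝ (fderiv ℝ F) x‖ * ‖e‖) * ‖e‖ := by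
          gcongr; exact ContinuousLinearMap.le_opNorm _ _
      _ ≤ M := by rw [he]; simpa using hH
  calc laplacian F x ≤ ∑ _i : Fin d, M := Finset.sum_le_sum fun i _ => key i
    _ = M * d := by simp [mul_comm]

end Aux

/-- If `F` is C² with `M`-Lipschitz gradient and `β > α > 0`, then for the
non-reversible Langevin generator with anti-symmetric `J`,
`L_J(e^{αF}) ≤ αβ⁻¹ M d · e^{αF}` pointwise. -/
theorem generator_exp_upper_bound {d : ℕ} {F : EuclideanSpace ℝ (Fin d) → ℝ}
    {M α β : ℝ} (hF : ContDiff ℝ 2 F) (hM : 0 ≤ M)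
    (hLip : ∀ w v : EuclideanSpace ℝ (Fin d),
      ‖gradient F w - gradient F v‖ ≤ M * ‖w - v‖)
    (hα : 0 < α) (hαβ : α < β)
    (J : EuclideanSpace ℝ (Fin d) →L[ℝ] EuclideanSpace ℝ (Fin d))
    (hJ : ∀ v w : EuclideanSpace ℝ (Fin d), ⟪J v, w⟫ = -⟪v, J w⟫) :
    ∀ x : EuclideanSpace ℝ (Fin d),
      -⟪(1 + J) (gradient F x), gradient (fun y => Real.exp (α * F y)) x⟫ +
          β⁻¹ * laplacian (fun y => Real.exp (α * F y)) x ≤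
        α * β⁻¹ * M * d * Real.exp (α * F x) := by
  intro x
  set v := gradient F x with hv
  have hβ : 0 < β := hα.trans hαβ
  have hβi : 0 < β⁻¹ := inv_pos.mpr hβ
  have hE : 0 < Real.exp (α * F x) := Real.exp_pos _
  have hJv : ⟪J v, v⟫ = 0 := by
    have h1 := hJ v v
    have h2 : ⟪v, J v⟫ = ⟪J v, v⟫ := real_inner_comm _ _
    linarith [h1, h2.symm ▸ h1]
  have hgrad : gradient (fun y => Real.exp (α * F y)) x
      = (α * Real.exp (α * F x)) • v := grad_expF hF α x
  have hinner : ⟪(1 + J) v, gradient (fun y => Real.exp (α * F y)) x⟫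
      = (α * Real.exp (α * F x)) * ‖v‖ ^ 2 := by
    rw [hgrad, real_inner_smul_right]
    have : (1 + J) v = v + J v := by simp
    rw [this, inner_add_left, hJv, real_inner_self_eq_norm_sq]
    ring
  rw [hinner, lap_expF hF α x]
  have hΔ : laplacian F x ≤ M * d := lap_le hF hM hLip x
  have hv2 : (0:ℝ) ≤ ‖v‖ ^ 2 := sq_nonneg _
  have hcoef : α ^ 2 * β⁻¹ ≤ α := by
    rw [pow_two]
    calc α * α * β⁻¹ ≤ α * β * β⁻¹ := by gcongr
      _ = α := by field_simp
  nlinarith [mul_le_mul_of_nonneg_left hΔ (le_of_lt (by positivity : (0:ℝ) < β⁻¹ * (α * Real.exp (α * F x)))),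
    mul_le_mul_of_nonneg_right hcoef (mul_nonneg hE.le hv2), sq_nonneg α]
end
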